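/- For every k > 0 and p ≥ 0, the equation G·x + p = s(f(k) − k·f'(k), f'(x)) has at most one solution x > 0; when it exists, denote it x = g(k,p). Moreover: (1) for every k > 0 the solution g(k,0) exists, and there exists K > 0 such that g(k,0) < k for all k ≥ K; (2) on its domain, g is continuous, strictly increasing in k, and strictly decreasing in p; (3) if g(k,p) exists, k' ≥ k, and 0 ≤ p' ≤ p, then g(k',p') exists and g(k,p) ≤ g(k',p'). -/

import Mathlib

open Filter Topology Set

noncomputable section

/-- Standing assumptions on the production function `f` with derivative `f'` and
second derivative `f''`: `f : (0,∞) → (0,∞)` is twice continuously differentiable,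
`f' > 0`, `f'' < 0`, `f'(k) → ∞` as `k → 0+`, and `lim_{k→∞} f'(k) < G`. -/
def ProdAssump (G : ℝ) (f f' f'' : ℝ → ℝ) : Prop :=
  0 < G ∧
  (∀ k > (0:ℝ), 0 < f k) ∧
  (∀ k > (0:ℝ), HasDerivAt f (f' k) k) ∧
  (∀ k > (0:ℝ), HasDerivAt f' (f'' k) k) ∧
  ContinuousOn f'' (Ioi 0) ∧
  (∀ k > (0:ℝ), 0 < f' k) ∧
  (∀ k > (0:ℝ), f'' k < 0) ∧
  Tendsto f' (nhdsWithin 0 (Ioi 0)) atTop ∧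
  (∃ L < G, Tendsto f' atTop (nhds L))

/-- Standing assumptions on the savings function: continuous, `0 < s(w,R) < w`,
strictly increasing in `w`, nondecreasing in `R`. -/
def SavAssump (s : ℝ → ℝ → ℝ) : Prop :=
  ContinuousOn (fun wR : ℝ × ℝ => s wR.1 wR.2) (Ioi 0 ×ˢ Ioi 0) ∧
  (∀ w > (0:ℝ), ∀ R > (0:ℝ), 0 < s w R ∧ s w R < w) ∧
  (∀ R > (0:ℝ), StrictMonoOn (fun w => s w R) (Ioi 0)) ∧
  (∀ w > (0:ℝ), MonotoneOn (fun R => s w R) (Ioi 0))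

/-- The savings function arises from a continuous, quasi-concave, strictly increasing
utility `U` on `(0,∞)²`: `s w R` is the unique maximizer of `σ ↦ U (w - σ) (R σ)`
over `(0, w)`. -/
def SavFromUtility (s : ℝ → ℝ → ℝ) : Prop :=
  ∃ U : ℝ → ℝ → ℝ,
    ContinuousOn (fun c : ℝ × ℝ => U c.1 c.2) (Ioi 0 ×ˢ Ioi 0) ∧
    QuasiconcaveOn ℝ (Ioi 0 ×ˢ Ioi 0) (fun c : ℝ × ℝ => U c.1 c.2) ∧
    (∀ c c' : ℝ × ℝ, c ∈ Ioi (0:ℝ) ×ˢ Ioi (0:ℝ) → c' ∈ Ioi (0:ℝ) ×ˢ Ioi (0:ℝ) →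
      c.1 ≤ c'.1 → c.2 ≤ c'.2 → c ≠ c' → U c.1 c.2 < U c'.1 c'.2) ∧
    (∀ w > (0:ℝ), ∀ R > (0:ℝ), s w R ∈ Ioo 0 w ∧
      ∀ σ ∈ Ioo (0:ℝ) w, σ ≠ s w R → U (w - σ) (R * σ) < U (w - s w R) (R * s w R))

/-- An equilibrium: sequences `k, p` with `k t > 0`, `p t ≥ 0`, `k 0 = k₀`,
the capital accumulation equation and the no-arbitrage price equation. -/
def IsEquilibrium (G : ℝ) (f f' : ℝ → ℝ) (s : ℝ → ℝ → ℝ) (k0 : ℝ) (d : ℕ → ℝ)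
    (k p : ℕ → ℝ) : Prop :=
  (∀ t, 0 < k t) ∧ (∀ t, 0 ≤ p t) ∧ k 0 = k0 ∧
  (∀ t, G * k (t + 1) + p t = s (f (k t) - k t * f' (k t)) (f' (k (t + 1)))) ∧
  (∀ t, p (t + 1) = f' (k (t + 1)) / G * p t - d (t + 1))

/-- Arrow–Debreu date-0 price `q_t = 1/(R_1 ⋯ R_t)` where `R_t = f'(k_t)`. -/
def qseq (f' : ℝ → ℝ) (k : ℕ → ℝ) (t : ℕ) : ℝ :=
  (∏ i ∈ Finset.range t, f' (k (i + 1)))⁻¹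

/-- Undetrended dividend `D_t = G^t d_t`. -/
def Dseq (G : ℝ) (d : ℕ → ℝ) (t : ℕ) : ℝ := G ^ t * d t

/-- Detrended fundamental value `v_t = G^{-t} q_t^{-1} ∑_{s>t} q_s D_s`. -/
def fundval (G : ℝ) (f' : ℝ → ℝ) (k : ℕ → ℝ) (d : ℕ → ℝ) (t : ℕ) : ℝ :=
  (G ^ t)⁻¹ * (qseq f' k t)⁻¹ * ∑' n : ℕ, qseq f' k (t + 1 + n) * Dseq G d (t + 1 + n)

/-- Detrended bubble component `b_t = p_t - v_t`. -/
def bubble (G : ℝ) (f' : ℝ → ℝ) (k p : ℕ → ℝ) (d : ℕ → ℝ) (t : ℕ) : ℝ :=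
  p t - fundval G f' k d t

/-- An equilibrium is bubbleless if `b_t = 0` for all `t`. -/
def Bubbleless (G : ℝ) (f' : ℝ → ℝ) (k p : ℕ → ℝ) (d : ℕ → ℝ) : Prop :=
  ∀ t, bubble G f' k p d t = 0

/-- An equilibrium is asymptotically bubbly if `liminf_{t→∞} b_t > 0`. -/
def AsympBubbly (G : ℝ) (f' : ℝ → ℝ) (k p : ℕ → ℝ) (d : ℕ → ℝ) : Prop :=
  0 < atTop.liminf (bubble G f' k p d)

/-- Long-run dividend growth rate `G_d = limsup_{t→∞} D_t^{1/t}` (as an extended real). -/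
def GdGrowth (G : ℝ) (d : ℕ → ℝ) : EReal :=
  atTop.limsup (fun t : ℕ => ((Dseq G d t ^ ((t : ℝ)⁻¹) : ℝ) : EReal))

/-- `x` solves the equation `G x + p = s(f(k) - k f'(k), f'(x))` with `x > 0`;
when the solution exists it is unique and denoted `g(k,p)`. -/
def IsGsol (G : ℝ) (f f' : ℝ → ℝ) (s : ℝ → ℝ → ℝ) (k p x : ℝ) : Prop :=
  0 < x ∧ G * x + p = s (f k - k * f' k) (f' x)

/-- Set of positive steady states: `𝒦 = {k > 0 : g(k,0) = k}`. -/
def Ksteady (G : ℝ) (f f' : ℝ → ℝ) (s : ℝ → ℝ → ℝ) : Set ℝ :=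
  {k : ℝ | 0 < k ∧ IsGsol G f f' s k 0 k}

/-- The equilibrium set `𝒫₀` of initial prices. -/
def P0set (G : ℝ) (f f' : ℝ → ℝ) (s : ℝ → ℝ → ℝ) (k0 : ℝ) (d : ℕ → ℝ) : Set ℝ :=
  {p0 : ℝ | ∃ k p : ℕ → ℝ, IsEquilibrium G f f' s k0 d k p ∧ p 0 = p0}

/-- Domain of `g`: pairs `(k,p)` with `k > 0`, `p ≥ 0` for which the equation
`G x + p = s(f(k) - k f'(k), f'(x))` has a (necessarily unique) solution `x > 0`. -/
def domg (G : ℝ) (f f' : ℝ → ℝ) (s : ℝ → ℝ → ℝ) : Set (ℝ × ℝ) :=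
  {kp : ℝ × ℝ | 0 < kp.1 ∧ 0 ≤ kp.2 ∧ ∃ x : ℝ, IsGsol G f f' s kp.1 kp.2 x}

section AuxLemmas

variable {G : ℝ} {f f' f'' : ℝ → ℝ} {s : ℝ → ℝ → ℝ}

lemma f'_anti (hf : ProdAssump G f f' f'') : StrictAntiOn f' (Ioi 0) := by
  obtain ⟨hG, hfpos, hdf, hdf', hcf'', hf'pos, hf''neg, _, _⟩ := hf
  apply strictAntiOn_of_deriv_neg (convex_Ioi 0)
  · exact fun k hk => ((hdf' k hk).continuousAt).continuousWithinAt
  · intro k hk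
    rw [interior_Ioi] at hk
    rw [(hdf' k hk).deriv]
    exact hf''neg k hk

/-- `f k ≥ k * f' k` for all `k > 0`. -/
lemma f_ge_mul (hf : ProdAssump G f f' f'') : ∀ k > (0:ℝ), k * f' k ≤ f k := by
  intro k hk
  obtain ⟨hG, hfpos, hdf, hdf', hcf'', hf'pos, hf''neg, _, _⟩ := hf
  by_contra h
  push_neg at h
  have hfp := hf'pos k hk
  have hfk := hfpos k hk
  have h1 : f k / f' k < k := (div_lt_iff₀ hfp).2 (by linarith)
  have h2 : 0 < f k / f' k := div_pos hfk hfp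
  set ε := (k - f k / f' k) / 2 with hεdef
  have hε : 0 < ε := by simp only [hεdef]; linarith
  have hεk : ε < k := by simp only [hεdef]; linarith
  obtain ⟨ξ, hξ, hslope⟩ := exists_hasDerivAt_eq_slope f f' hεk
    (fun x hx => ((hdf x (lt_of_lt_of_le hε hx.1)).continuousAt).continuousWithinAt)
    (fun x hx => hdf x (hε.trans hx.1))
  have hξk : f' k < f' ξ := f'_anti ⟨hG, hfpos, hdf, hdf', hcf'', hf'pos, hf''neg,
    by assumption, by assumption⟩ (hε.trans hξ.1) hk hξ.2
  have hfε : 0 < f ε := hfpos ε hε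
  have hne : k - ε ≠ 0 := by linarith
  have heq : f k - f ε = (k - ε) * f' ξ := by
    rw [eq_div_iff hne] at hslope
    linear_combination -hslope
  -- f k = f ε + (k - ε) * f' ξ > (k - ε) * f' k
  have hgt : (k - ε) * f' k < f k := by nlinarith
  -- but (k - ε) * f' k = k f' k - ε f' k, and ε = (k - fk/f'k)/2
  have : f k / f' k > k - ε := (lt_div_iff₀ hfp).2 (by nlinarith)
  simp only [hεdef] at this
  nlinarith [this, hfp]

/-- `w k = f k - k * f' k > 0` for `k > 0`. -/
lemma w_pos (hf : ProdAssump G f f' f'') : ∀ k > (0:ℝ), 0 < f k - k * f' k := by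
  intro k hk
  have hanti := f'_anti hf
  have hge := f_ge_mul hf (k/2) (by linarith)
  obtain ⟨hG, hfpos, hdf, hdf', hcf'', hf'pos, hf''neg, _, _⟩ := hf
  have hk2 : (0:ℝ) < k/2 := by linarith
  obtain ⟨ξ, hξ, hslope⟩ := exists_hasDerivAt_eq_slope f f' (show k/2 < k by linarith)
    (fun x hx => ((hdf x (lt_of_lt_of_le hk2 hx.1)).continuousAt).continuousWithinAt)
    (fun x hx => hdf x (hk2.trans hx.1))
  have hξ0 : (0:ℝ) < ξ := hk2.trans hξ.1
  have h1 : f' k < f' ξ := hanti hξ0 hk hξ.2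
  have h2 : f' k < f' (k/2) := hanti hk2 hk (by linarith)
  have hne : k - k/2 ≠ 0 := by linarith
  have heq : f k - f (k/2) = (k - k/2) * f' ξ := by
    rw [eq_div_iff hne] at hslope
    linear_combination -hslope
  nlinarith

lemma w_mono (hf : ProdAssump G f f' f'') :
    StrictMonoOn (fun k => f k - k * f' k) (Ioi 0) := by
  obtain ⟨hG, hfpos, hdf, hdf', hcf'', hf'pos, hf''neg, _, _⟩ := hf
  apply strictMonoOn_of_deriv_pos (convex_Ioi 0)
  · intro k hk
    exact (((hdf k hk).continuousAt).sub
      ((continuousAt_id.mul ((hdf' k hk).continuousAt)))).continuousWithinAt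
  · intro k hk
    rw [interior_Ioi] at hk
    have hD : HasDerivAt (fun k => f k - k * f' k) (f' k - (1 * f' k + k * f'' k)) k :=
      (hdf k hk).sub ((hasDerivAt_id k).mul (hdf' k hk))
    rw [hD.deriv]
    have := hf''neg k hk
    have hk0 : (0:ℝ) < k := hk
    nlinarith

/-- Strict antitonicity of `x ↦ s w (f' x) - (G x + p)` on `(0,∞)`. -/
lemma phi_anti (hf : ProdAssump G f f' f'') (hs : SavAssump s) (w p : ℝ) (hw : 0 < w) :
    StrictAntiOn (fun x => s w (f' x) - (G * x + p)) (Ioi 0) := by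
  intro x hx y hy hxy
  have h1 : f' y < f' x := f'_anti hf hx hy hxy
  have hf'x : 0 < f' x := hf.2.2.2.2.2.1 x hx
  have hf'y : 0 < f' y := hf.2.2.2.2.2.1 y hy
  have h2 : s w (f' y) ≤ s w (f' x) := hs.2.2.2 w hw hf'y hf'x h1.le
  have hG : 0 < G := hf.1
  have : G * x < G * y := by
    apply mul_lt_mul_of_pos_left hxy hG
  simp only
  linarith

/-- If `φ(c) < 0` at some `c > 0`, the solution is less than `c`. -/
lemma sol_lt (hf : ProdAssump G f f' f'') (hs : SavAssump s) {k p x c : ℝ}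
    (hk : 0 < k) (hsol : IsGsol G f f' s k p x) (hc : 0 < c)
    (hneg : s (f k - k * f' k) (f' c) - (G * c + p) < 0) : x < c := by
  have hw := w_pos hf k hk
  obtain ⟨hx, heq⟩ := hsol
  by_contra h
  push_neg at h
  rcases eq_or_lt_of_le h with rfl | h
  · rw [← heq] at hneg; linarith
  · have := phi_anti hf hs (f k - k * f' k) p hw hc hx h
    simp only at this
    rw [← heq] at this
    linarith

/-- If `φ(c) > 0` at some `c > 0`, the solution is greater than `c`. -/
lemma sol_gt (hf : ProdAssump G f f' f'') (hs : SavAssump s) {k p x c : ℝ}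
    (hk : 0 < k) (hsol : IsGsol G f f' s k p x) (hc : 0 < c)
    (hpos : 0 < s (f k - k * f' k) (f' c) - (G * c + p)) : c < x := by
  have hw := w_pos hf k hk
  obtain ⟨hx, heq⟩ := hsol
  by_contra h
  push_neg at h
  rcases eq_or_lt_of_le h with rfl | h
  · rw [← heq] at hpos; linarith
  · have := phi_anti hf hs (f k - k * f' k) p hw hx hc h
    simp only at this
    rw [← heq] at this
    linarith

lemma gsol_unique (hf : ProdAssump G f f' f'') (hs : SavAssump s) {k p x x' : ℝ}
    (hk : 0 < k) (h1 : IsGsol G f f' s k p x) (h2 : IsGsol G f f' s k p x') : x = x' := by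
  have hw := w_pos hf k hk
  rcases lt_trichotomy x x' with hlt | heq | hlt
  · have h3 := phi_anti hf hs _ p hw h1.1 h2.1 hlt
    simp only at h3
    rw [← h1.2, ← h2.2] at h3
    linarith
  · exact heq
  · have h3 := phi_anti hf hs _ p hw h2.1 h1.1 hlt
    simp only at h3
    rw [← h1.2, ← h2.2] at h3
    linarith

lemma sContAt (hf : ProdAssump G f f' f'') (hs : SavAssump s) {w x : ℝ}
    (hw : 0 < w) (hx : 0 < x) : ContinuousAt (fun y => s w (f' y)) x := by
  have hf'x : 0 < f' x := hf.2.2.2.2.2.1 x hx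
  have h1 : ContinuousAt (fun y : ℝ => ((w, f' y) : ℝ × ℝ)) x :=
    continuousAt_const.prodMk ((hf.2.2.2.1 x hx).continuousAt)
  have h2 : ContinuousAt (fun wR : ℝ × ℝ => s wR.1 wR.2) (w, f' x) :=
    hs.1.continuousAt ((isOpen_Ioi.prod isOpen_Ioi).mem_nhds ⟨hw, hf'x⟩)
  exact ContinuousAt.comp (g := fun wR : ℝ × ℝ => s wR.1 wR.2)
    (f := fun y : ℝ => ((w, f' y) : ℝ × ℝ)) (x := x) h2 h1

/-- Existence of a solution `x ≥ x₀` whenever `φ(x₀) ≥ 0` at some `x₀ > 0`. -/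
lemma exists_sol_ge (hf : ProdAssump G f f' f'') (hs : SavAssump s) {k p x₀ : ℝ}
    (hk : 0 < k) (hx₀ : 0 < x₀) (hp : 0 ≤ p)
    (h0 : 0 ≤ s (f k - k * f' k) (f' x₀) - (G * x₀ + p)) :
    ∃ x : ℝ, IsGsol G f f' s k p x ∧ x₀ ≤ x := by
  have hG : 0 < G := hf.1
  have hw : 0 < f k - k * f' k := w_pos hf k hk
  set w := f k - k * f' k with hwd
  set x₁ := max (x₀ + 1) (w / G) with hx₁d
  have hx₀₁ : x₀ ≤ x₁ := le_trans (by linarith) (le_max_left _ _)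
  have hx₁pos : 0 < x₁ := lt_of_lt_of_le hx₀ hx₀₁
  have hf'x₁ : 0 < f' x₁ := hf.2.2.2.2.2.1 x₁ hx₁pos
  have h1 : s w (f' x₁) - (G * x₁ + p) < 0 := by
    have hlt : s w (f' x₁) < w := (hs.2.1 w hw (f' x₁) hf'x₁).2
    have hge : w / G ≤ x₁ := le_max_right _ _
    have : w ≤ G * x₁ := by
      rw [div_le_iff₀ hG] at hge
      linarith
    linarith
  have hcont : ContinuousOn (fun x => s w (f' x) - (G * x + p)) (Icc x₀ x₁) := by
    intro x hx
    exact (((sContAt hf hs hw (lt_of_lt_of_le hx₀ hx.1)).sub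
      (by fun_prop))).continuousWithinAt
  have hsub := intermediate_value_Icc' hx₀₁ hcont
  obtain ⟨x, hxmem, hxeq⟩ := hsub (⟨h1.le, h0⟩ :
    (0:ℝ) ∈ Icc (s w (f' x₁) - (G * x₁ + p)) (s w (f' x₀) - (G * x₀ + p)))
  refine ⟨x, ⟨lt_of_lt_of_le hx₀ hxmem.1, ?_⟩, hxmem.1⟩
  simp only at hxeq
  linarith

lemma exists_g0 (hf : ProdAssump G f f' f'') (hs : SavAssump s) :
    ∀ k > (0:ℝ), ∃ x : ℝ, IsGsol G f f' s k 0 x := by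
  intro k hk
  have hG : 0 < G := hf.1
  have hw : 0 < f k - k * f' k := w_pos hf k hk
  set w := f k - k * f' k with hwd
  have hf'1 : 0 < f' 1 := hf.2.2.2.2.2.1 1 one_pos
  have hc : 0 < s w (f' 1) := (hs.2.1 w hw (f' 1) hf'1).1
  set c := s w (f' 1) with hcd
  set x₀ := min 1 (c / (2*G)) with hx₀d
  have hx₀ : 0 < x₀ := lt_min one_pos (by positivity)
  have hx₀1 : x₀ ≤ 1 := min_le_left _ _
  have hf'x₀ : 0 < f' x₀ := hf.2.2.2.2.2.1 x₀ hx₀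
  have hle : f' 1 ≤ f' x₀ := by
    rcases eq_or_lt_of_le hx₀1 with h | h
    · rw [h]
    · exact (f'_anti hf hx₀ (mem_Ioi.2 one_pos) h).le
  have hsle : c ≤ s w (f' x₀) := hs.2.2.2 w hw hf'1 hf'x₀ hle
  have hGx₀ : G * x₀ ≤ c / 2 := by
    have : x₀ ≤ c / (2*G) := min_le_right _ _
    calc G * x₀ ≤ G * (c / (2*G)) := by nlinarith
    _ = c / 2 := by field_simp
  have h0 : 0 ≤ s w (f' x₀) - (G * x₀ + 0) := by linarith
  obtain ⟨x, hx, _⟩ := exists_sol_ge hf hs hk hx₀ le_rfl h0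
  exact ⟨x, hx⟩

/-- For large `k`, `w k < G k`. -/
lemma w_lt_Gk (hf : ProdAssump G f f' f'') :
    ∃ K > (0:ℝ), ∀ k ≥ K, f k - k * f' k < G * k := by
  obtain ⟨hG, hfpos, hdf, hdf', hcf'', hf'pos, hf''neg, htop, L, hLG, hL⟩ := hf
  have hf' : ProdAssump G f f' f'' := ⟨hG, hfpos, hdf, hdf', hcf'', hf'pos, hf''neg, htop, L, hLG, hL⟩
  have hev : ∀ᶠ k in Filter.atTop, f' k < G := hL.eventually (Filter.Tendsto.eventually_lt_const hLG tendsto_id)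
  rw [Filter.eventually_atTop] at hev
  obtain ⟨k₁, hk₁⟩ := hev
  set k₀ := max k₁ 1 with hk₀d
  have hk₀pos : (0:ℝ) < k₀ := lt_of_lt_of_le one_pos (le_max_right _ _)
  have hfk₀ : f' k₀ < G := hk₁ k₀ (le_max_left _ _)
  have hf'k₀pos : 0 < f' k₀ := hf'pos k₀ hk₀pos
  have hfk₀pos : 0 < f k₀ := hfpos k₀ hk₀pos
  set K := max (2 * k₀) (f k₀ / (G - f' k₀) + k₀) with hKd
  refine ⟨K, lt_of_lt_of_le (by linarith) (le_max_left _ _), ?_⟩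
  intro k hk
  have hkk₀ : k₀ < k := by
    have : 2 * k₀ ≤ k := le_trans (le_max_left _ _) hk
    linarith
  have hkpos : 0 < k := hk₀pos.trans hkk₀
  -- concavity: f k ≤ f k₀ + (k - k₀) f' k₀
  obtain ⟨ξ, hξ, hslope⟩ := exists_hasDerivAt_eq_slope f f' hkk₀
    (fun x hx => ((hdf x (lt_of_lt_of_le hk₀pos hx.1)).continuousAt).continuousWithinAt)
    (fun x hx => hdf x (hk₀pos.trans hx.1))
  have hξ0 : (0:ℝ) < ξ := hk₀pos.trans hξ.1
  have hξ' : f' ξ < f' k₀ := f'_anti hf' hk₀pos hξ0 hξ.1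
  have hne : k - k₀ ≠ 0 := by linarith
  have heq : f k - f k₀ = (k - k₀) * f' ξ := by
    rw [eq_div_iff hne] at hslope
    linear_combination -hslope
  have hfk : f k ≤ f k₀ + (k - k₀) * f' k₀ := by nlinarith
  have hf'k : 0 < f' k := hf'pos k hkpos
  have hK2 : f k₀ / (G - f' k₀) + k₀ ≤ k := le_trans (le_max_right _ _) hk
  have : f k₀ ≤ (k - k₀) * (G - f' k₀) := by
    rw [div_add' _ _ _ (by linarith : G - f' k₀ ≠ 0), div_le_iff₀ (by linarith)] at hK2
    nlinarith
  nlinarith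

/-- Continuity in `(k,p)` of `(k,p) ↦ s(w k, f' b) - (G b + p)` at a point with `k > 0`. -/
lemma FContAt {G : ℝ} {f f' f'' : ℝ → ℝ} {s : ℝ → ℝ → ℝ}
    (hf : ProdAssump G f f' f'') (hs : SavAssump s) {b : ℝ} (hb : 0 < b) {kp : ℝ × ℝ}
    (hk : 0 < kp.1) :
    ContinuousAt (fun q : ℝ × ℝ => s (f q.1 - q.1 * f' q.1) (f' b) - (G * b + q.2)) kp := by
  have hwc : ContinuousAt (fun q : ℝ × ℝ => f q.1 - q.1 * f' q.1) kp := by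
    have h1 : ContinuousAt (fun y : ℝ => f y - y * f' y) kp.1 :=
      ((hf.2.2.1 kp.1 hk).continuousAt).sub
        (continuousAt_id.mul ((hf.2.2.2.1 kp.1 hk).continuousAt))
    exact h1.comp continuousAt_fst
  have hw : 0 < f kp.1 - kp.1 * f' kp.1 := w_pos hf kp.1 hk
  have hf'b : 0 < f' b := hf.2.2.2.2.2.1 b hb
  have hsc : ContinuousAt (fun wR : ℝ × ℝ => s wR.1 wR.2)
      ((f kp.1 - kp.1 * f' kp.1), f' b) :=
    hs.1.continuousAt ((isOpen_Ioi.prod isOpen_Ioi).mem_nhds ⟨hw, hf'b⟩)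
  have h4 : ContinuousAt (fun q : ℝ × ℝ => s (f q.1 - q.1 * f' q.1) (f' b)) kp :=
    ContinuousAt.comp (g := fun wR : ℝ × ℝ => s wR.1 wR.2)
      (f := fun q : ℝ × ℝ => ((f q.1 - q.1 * f' q.1, f' b) : ℝ × ℝ)) (x := kp)
      hsc (hwc.prodMk continuousAt_const)
  exact h4.sub (continuousAt_const.add continuousAt_snd)

end AuxLemmas

/-- Lemma `lem:g`: uniqueness of the solution `g(k,p)`, existence of
`g(k,0)`, `g(k,0) < k` for large `k`, continuity and strict monotonicity of `g` on
its domain, and the comparison property. -/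
theorem stmt2 (G : ℝ) (f f' f'' : ℝ → ℝ) (s : ℝ → ℝ → ℝ)
    (hf : ProdAssump G f f' f'') (hs : SavAssump s) :
    (∀ k p x x' : ℝ, 0 < k → 0 ≤ p →
      IsGsol G f f' s k p x → IsGsol G f f' s k p x' → x = x') ∧
    (∀ k > (0:ℝ), ∃ x : ℝ, IsGsol G f f' s k 0 x) ∧
    (∃ K > (0:ℝ), ∀ k ≥ K, ∀ x : ℝ, IsGsol G f f' s k 0 x → x < k) ∧
    (∀ gfun : ℝ → ℝ → ℝ,
      (∀ k p : ℝ, (k, p) ∈ domg G f f' s → IsGsol G f f' s k p (gfun k p)) →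
      ContinuousOn (fun kp : ℝ × ℝ => gfun kp.1 kp.2) (domg G f f' s) ∧
      (∀ p k k' : ℝ, (k, p) ∈ domg G f f' s → (k', p) ∈ domg G f f' s →
        k < k' → gfun k p < gfun k' p) ∧
      (∀ k p p' : ℝ, (k, p) ∈ domg G f f' s → (k, p') ∈ domg G f f' s →
        p < p' → gfun k p' < gfun k p)) ∧
    (∀ k k' p p' : ℝ, (k, p) ∈ domg G f f' s → k ≤ k' → 0 ≤ p' → p' ≤ p →
      (k', p') ∈ domg G f f' s ∧
      ∀ x x' : ℝ, IsGsol G f f' s k p x → IsGsol G f f' s k' p' x' → x ≤ x') := by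
  have hG : 0 < G := hf.1
  refine ⟨fun k p x x' hk _ h1 h2 => gsol_unique hf hs hk h1 h2, exists_g0 hf hs, ?_, ?_, ?_⟩
  · -- large k : solution < k
    obtain ⟨K, hK, hKlt⟩ := w_lt_Gk hf
    refine ⟨K, hK, fun k hk x hx => ?_⟩
    have hkpos : 0 < k := lt_of_lt_of_le hK hk
    have hw := w_pos hf k hkpos
    have hslt := (hs.2.1 _ hw (f' x) (hf.2.2.2.2.2.1 x hx.1)).2
    have h1 := hx.2
    have h2 := hKlt k hk
    nlinarith
  · -- continuity and strict monotonicity of gfun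
    intro gfun hg
    refine ⟨?_, ?_, ?_⟩
    · -- continuity
      intro kp hkp
      have hk0 : 0 < kp.1 := hkp.1
      have hsol : IsGsol G f f' s kp.1 kp.2 (gfun kp.1 kp.2) :=
        hg kp.1 kp.2 (by simpa using hkp)
      have hw := w_pos hf kp.1 hk0
      apply tendsto_order.2
      constructor
      · intro b hb
        rcases le_or_gt b 0 with hb0 | hb0
        · filter_upwards [self_mem_nhdsWithin] with q hq
          exact lt_of_le_of_lt hb0 (hg q.1 q.2 (by simpa using hq)).1
        · have hφ : 0 < s (f kp.1 - kp.1 * f' kp.1) (f' b) - (G * b + kp.2) := by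
            have := phi_anti hf hs _ kp.2 hw hb0 hsol.1 hb
            simp only at this
            rw [← hsol.2] at this
            linarith
          have hca := FContAt hf hs hb0 hk0 (s := s)
          have hev : ∀ᶠ q : ℝ × ℝ in 𝓝 kp,
              0 < s (f q.1 - q.1 * f' q.1) (f' b) - (G * b + q.2) :=
            hca.eventually (eventually_gt_nhds hφ)
          filter_upwards [nhdsWithin_le_nhds hev, self_mem_nhdsWithin] with q hq1 hq2
          exact sol_gt hf hs hq2.1 (hg q.1 q.2 (by simpa using hq2)) hb0 hq1
      · intro b hb
        have hb0 : 0 < b := hsol.1.trans hb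
        have hφ : s (f kp.1 - kp.1 * f' kp.1) (f' b) - (G * b + kp.2) < 0 := by
          have := phi_anti hf hs _ kp.2 hw hsol.1 hb0 hb
          simp only at this
          rw [← hsol.2] at this
          linarith
        have hca := FContAt hf hs hb0 hk0 (s := s)
        have hev : ∀ᶠ q : ℝ × ℝ in 𝓝 kp,
            s (f q.1 - q.1 * f' q.1) (f' b) - (G * b + q.2) < 0 :=
          hca.eventually (eventually_lt_nhds hφ)
        filter_upwards [nhdsWithin_le_nhds hev, self_mem_nhdsWithin] with q hq1 hq2
        exact sol_lt hf hs hq2.1 (hg q.1 q.2 (by simpa using hq2)) hb0 hq1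
    · -- strictly increasing in k
      intro p k k' hk hk' hlt
      have hx : IsGsol G f f' s k p (gfun k p) := hg k p hk
      have hx' : IsGsol G f f' s k' p (gfun k' p) := hg k' p hk'
      apply sol_gt hf hs hk'.1 hx' hx.1
      have hwk := w_pos hf k hk.1
      have hwk' := w_pos hf k' hk'.1
      have hwlt : f k - k * f' k < f k' - k' * f' k' := by
        have := w_mono hf hk.1 hk'.1 hlt
        simpa using this
      have hf'x : 0 < f' (gfun k p) := hf.2.2.2.2.2.1 _ hx.1
      have hsx : s (f k - k * f' k) (f' (gfun k p)) <
          s (f k' - k' * f' k') (f' (gfun k p)) :=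
        hs.2.2.1 (f' (gfun k p)) hf'x hwk hwk' hwlt
      linarith [hx.2]
    · -- strictly decreasing in p
      intro k p p' hk hk' hlt
      have hx : IsGsol G f f' s k p (gfun k p) := hg k p hk
      have hx' : IsGsol G f f' s k p' (gfun k p') := hg k p' hk'
      apply sol_lt hf hs hk.1 hx' hx.1
      have := hx.2
      linarith
  · -- comparison
    intro k k' p p' hkp hkk' hp' hpp'
    obtain ⟨hk0, hp0, x, hx⟩ := hkp
    have hk'0 : 0 < k' := lt_of_lt_of_le hk0 hkk'
    have hwk := w_pos hf k hk0
    have hwk' := w_pos hf k' hk'0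
    have hf'x : 0 < f' x := hf.2.2.2.2.2.1 x hx.1
    have hwle : f k - k * f' k ≤ f k' - k' * f' k' := by
      rcases eq_or_lt_of_le hkk' with rfl | h
      · exact le_rfl
      · have := w_mono hf hk0 hk'0 h
        simp only at this
        linarith
    have hsle : s (f k - k * f' k) (f' x) ≤ s (f k' - k' * f' k') (f' x) := by
      rcases eq_or_lt_of_le hwle with h | h
      · rw [h]
      · exact (hs.2.2.1 (f' x) hf'x hwk hwk' h).le
    have h0 : 0 ≤ s (f k' - k' * f' k') (f' x) - (G * x + p') := by
      have := hx.2
      linarith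
    obtain ⟨x', hx', hle⟩ := exists_sol_ge hf hs hk'0 hx.1 hp' h0
    refine ⟨⟨hk'0, hp', x', hx'⟩, fun y y' hy hy' => ?_⟩
    have h1 : y = x := gsol_unique hf hs hk0 hy hx
    have h2 : y' = x' := gsol_unique hf hs hk'0 hy' hx'
    rw [h1, h2]
    exact hle

end
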